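/- Let L be a finite-dimensional Lie algebra over a field F of characteristic p > 0 and let (𝔏, ·^[p], ι) be a p-envelope of L whose center C(𝔏) is contained in ι(L) (this condition characterizes the minimal p-envelopes of L). Then: (1) if L is simple (i.e., L is non-abelian and has no ideals other than 0 and L), then 𝔏 has no p-ideals other than 0 and 𝔏; (2) if L is semisimple (i.e., L has no nonzero abelian ideals), then 𝔏 is semisimple. -/

import Mathlib

open scoped BigOperators TensorProduct DirectSum

noncomputable section

/-- Viewing `v : ℕ → 𝔏` as the coefficient list of a polynomial `Σₖ (v k) tᵏ` with
coefficients in the Lie algebra `𝔏`, this is the coefficient list of its image under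
`ad (t • x + y)`, i.e. of `⁅t • x + y, Σₖ (v k) tᵏ⁆`. -/
def adPolyCoeff {𝔏 : Type*} [LieRing 𝔏] (x y : 𝔏) (v : ℕ → 𝔏) : ℕ → 𝔏 :=
  fun k => ⁅y, v k⁆ + if k = 0 then 0 else ⁅x, v (k - 1)⁆

/-- `pMap` is a `p`-operation on the Lie algebra `𝔏` over `F`, i.e. `(𝔏, pMap)` is a
restricted Lie algebra (Jacobson's axioms):
* `ad (x^[p]) = (ad x) ^ p`;
* `(a • x)^[p] = a ^ p • x^[p]`;
* `(x + y)^[p] = x^[p] + y^[p] + Σ_{i=1}^{p-1} sᵢ(x, y)`, where `i • sᵢ(x, y)` is the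
  coefficient of `t^(i-1)` in `(ad (t • x + y))^(p-1) (x)`. -/
def IsPMap (F : Type*) [Field F] (𝔏 : Type*) [LieRing 𝔏] [LieAlgebra F 𝔏]
    (p : ℕ) (pMap : 𝔏 → 𝔏) : Prop :=
  (∀ x : 𝔏, LieAlgebra.ad F 𝔏 (pMap x) = (LieAlgebra.ad F 𝔏 x) ^ p) ∧
  (∀ (a : F) (x : 𝔏), pMap (a • x) = a ^ p • pMap x) ∧
  (∀ x y : 𝔏, ∃ s : ℕ → 𝔏,
    (∀ i : ℕ, 1 ≤ i → i ≤ p - 1 →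
      i • s i = (adPolyCoeff x y)^[p - 1] (fun k => if k = 0 then x else 0) (i - 1)) ∧
    pMap (x + y) = pMap x + pMap y + ∑ i ∈ Finset.Icc 1 (p - 1), s i)

/-- `(𝔏, pMap, ι)` is a `p`-envelope of the Lie algebra `L`: `(𝔏, pMap)` is a restricted
Lie algebra, `ι : L → 𝔏` is an injective morphism of Lie algebras, and the smallest
`p`-subalgebra of `𝔏` containing `ι(L)` is `𝔏` itself. -/
def IsPEnvelope (F : Type*) [Field F] (p : ℕ)
    (L : Type*) [LieRing L] [LieAlgebra F L]
    (𝔏 : Type*) [LieRing 𝔏] [LieAlgebra F 𝔏]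
    (pMap : 𝔏 → 𝔏) (ι : L →ₗ⁅F⁆ 𝔏) : Prop :=
  IsPMap F 𝔏 p pMap ∧ Function.Injective ι ∧
    ∀ K : LieSubalgebra F 𝔏, (∀ x ∈ K, pMap x ∈ K) → ι.range ≤ K → K = ⊤

private lemma adpow_mem {F : Type*} [Field F] {𝔏 : Type*} [LieRing 𝔏] [LieAlgebra F 𝔏]
    (S : LieSubalgebra F 𝔏) (x : 𝔏) (hx : ∀ z ∈ S, ⁅x, z⁆ ∈ S) :
    ∀ n : ℕ, ∀ y ∈ S, ((LieAlgebra.ad F 𝔏 x) ^ n) y ∈ S := by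
  intro n
  induction n with
  | zero => intro y hy; simpa using hy
  | succ n ih =>
      intro y hy
      rw [pow_succ]
      exact ih _ (by simpa [LieAlgebra.ad_apply] using hx y hy)

/-- Let `L` be a finite-dimensional Lie algebra over a field `F` of
characteristic `p > 0` and let `(𝔏, pMap, ι)` be a `p`-envelope of `L` whose center is
contained in `ι(L)` (this characterizes the minimal `p`-envelopes).  Then: (1) if `L` is
simple, then `𝔏` has no `p`-ideals other than `⊥` and `⊤`; (2) if `L` is semisimple
(no nonzero abelian ideals), then `𝔏` is semisimple. -/
theorem statement2 (F : Type*) [Field F] (p : ℕ) [CharP F p] (hp : 0 < p)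
    (L : Type*) [LieRing L] [LieAlgebra F L] [FiniteDimensional F L]
    (𝔏 : Type*) [LieRing 𝔏] [LieAlgebra F 𝔏]
    (pMap : 𝔏 → 𝔏) (ι : L →ₗ⁅F⁆ 𝔏) (henv : IsPEnvelope F p L 𝔏 pMap ι)
    (hmin : ∀ z ∈ LieAlgebra.center F 𝔏, z ∈ ι.range) :
    ((¬IsLieAbelian L ∧ ∀ I : LieIdeal F L, I = ⊥ ∨ I = ⊤) →
      ∀ J : LieIdeal F 𝔏, (∀ x ∈ J, pMap x ∈ J) → J = ⊥ ∨ J = ⊤) ∧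
    ((∀ I : LieIdeal F L, IsLieAbelian I → I = ⊥) →
      ∀ J : LieIdeal F 𝔏, IsLieAbelian J → J = ⊥) := by
  obtain ⟨⟨hpm, -, -⟩, hinj, hgen⟩ := henv
  -- `ι.range` is an ideal of `𝔏`
  have hideal : ∀ x : 𝔏, ∀ y ∈ ι.range, ⁅x, y⁆ ∈ ι.range := by
    have hN : (ι.range).normalizer = ⊤ := by
      apply hgen
      · intro x hx
        rw [LieSubalgebra.mem_normalizer_iff] at hx ⊢
        intro y hy
        have : ⁅pMap x, y⁆ = ((LieAlgebra.ad F 𝔏 x) ^ p) y := by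
          rw [← hpm]; rfl
        rw [this]
        exact adpow_mem _ x hx p y hy
      · exact LieSubalgebra.le_normalizer _
    intro x y hy
    have hxN : x ∈ (ι.range).normalizer := hN ▸ LieSubalgebra.mem_top x
    exact (LieSubalgebra.mem_normalizer_iff _ x).mp hxN y hy
  -- `[𝔏, 𝔏] ⊆ ι.range`
  have hcomm : ∀ x y : 𝔏, ⁅x, y⁆ ∈ ι.range := by
    set A : LieSubalgebra F 𝔏 :=
      { carrier := {x : 𝔏 | ∀ y : 𝔏, ⁅x, y⁆ ∈ ι.range}
        add_mem' := fun {a b} ha hb y => by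
          rw [add_lie]; exact add_mem (ha y) (hb y)
        zero_mem' := fun y => by rw [zero_lie]; exact zero_mem _
        smul_mem' := fun c a ha y => by
          rw [smul_lie]; exact Submodule.smul_mem _ _ (ha y)
        lie_mem' := fun {a b} ha hb y => by
          rw [lie_lie]; exact sub_mem (ha ⁅b, y⁆) (hb ⁅a, y⁆) } with hA
    have hAtop : A = ⊤ := by
      apply hgen
      · intro x hx y
        have : ⁅pMap x, y⁆ = ((LieAlgebra.ad F 𝔏 x) ^ p) y := by
          rw [← hpm]; rfl
        rw [this]
        obtain ⟨n, rfl⟩ := Nat.exists_eq_succ_of_ne_zero hp.ne'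
        rw [pow_succ]
        exact adpow_mem _ x (fun z _ => hx z) n _ (hx y)
      · rintro z ⟨u, rfl⟩
        intro y
        rw [← lie_skew]
        exact neg_mem (hideal y (ι u) ⟨u, rfl⟩)
    intro x y
    have : x ∈ A := hAtop ▸ LieSubalgebra.mem_top x
    exact this y
  -- any ideal meeting `ι.range` trivially is trivial
  have htriv : ∀ J : LieIdeal F 𝔏, (∀ u : L, ι u ∈ J → u = 0) → J = ⊥ := by
    intro J hJ
    rw [LieSubmodule.eq_bot_iff]
    intro x hx
    have hxc : x ∈ LieAlgebra.center F 𝔏 := by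
      rw [LieAlgebra.center, LieModule.mem_maxTrivSubmodule]
      intro y
      obtain ⟨u, hu⟩ := hcomm y x
      have : ι u ∈ J := hu ▸ lie_mem_right F 𝔏 J y x hx
      rw [← hu, hJ u this]; exact ι.map_zero
    obtain ⟨u, rfl⟩ := hmin x hxc
    rw [hJ u hx]; exact ι.map_zero
  constructor
  · rintro ⟨-, hsimple⟩ J hJp
    rcases hsimple (LieIdeal.comap ι J) with hI | hI
    · left
      apply htriv
      intro u hu
      have : u ∈ LieIdeal.comap ι J := LieIdeal.mem_comap.mpr hu
      rw [hI] at this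
      simpa using this
    · right
      have hle : ι.range ≤ (J : LieSubalgebra F 𝔏) := by
        rintro z ⟨u, rfl⟩
        have : u ∈ LieIdeal.comap ι J := hI ▸ LieSubmodule.mem_top u
        exact LieIdeal.mem_comap.mp this
      have : (J : LieSubalgebra F 𝔏) = ⊤ := hgen _ (fun x hx => hJp x hx) hle
      rw [eq_top_iff]
      intro x _
      have hxJ : x ∈ (J : LieSubalgebra F 𝔏) := this ▸ LieSubalgebra.mem_top x
      exact hxJ
  · intro hss J hJab
    apply htriv
    intro u hu
    have hI : LieIdeal.comap ι J = ⊥ := by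
      apply hss
      constructor
      intro a b
      have haJ : ι ↑a ∈ J := LieIdeal.mem_comap.mp a.2
      have hbJ : ι ↑b ∈ J := LieIdeal.mem_comap.mp b.2
      have h0 : ⁅(⟨ι ↑a, haJ⟩ : J), (⟨ι ↑b, hbJ⟩ : J)⁆ = 0 := trivial_lie_zero _ _ _ _
      have h0' : ⁅ι (↑a : L), ι (↑b : L)⁆ = 0 := by
        exact congrArg Subtype.val h0
      have key : ⁅(↑a : L), (↑b : L)⁆ = 0 := by
        apply hinj
        rw [LieHom.map_lie]; refine Eq.trans ?_ (map_zero ι).symm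
        exact h0'
      exact Subtype.ext (by simpa using key)
    have : u ∈ LieIdeal.comap ι J := LieIdeal.mem_comap.mpr hu
    rw [hI] at this
    simpa using this
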